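/- Let ||·|| be a unitarily invariant norm on n×n complex matrices normalized so that ||E_11|| = 1, and suppose ||E_11 + ... + E_kk|| = k for some k ≤ n. Then for every n×n matrix B of rank at most k, ||B|| equals the trace norm of B (the sum of its singular values). -/

import Mathlib

open Matrix ComplexOrder

/-- The trace norm of a square complex matrix: `tr ((Bᴴ B)^{1/2})`, i.e. the
sum of the singular values of `B`. -/
noncomputable def traceNorm {n : ℕ} (B : Matrix (Fin n) (Fin n) ℂ) : ℝ :=
  (((Matrix.posSemidef_conjTranspose_mul_self B).1.eigenvectorUnitary : Matrix (Fin n) (Fin n) ℂ) *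
    Matrix.diagonal (((↑) : ℝ → ℂ) ∘ Real.sqrt ∘ (Matrix.posSemidef_conjTranspose_mul_self B).1.eigenvalues) *
    (star (Matrix.posSemidef_conjTranspose_mul_self B).1.eigenvectorUnitary : Matrix (Fin n) (Fin n) ℂ)).trace.re

/-- The partial identity `E₁₁ + ⋯ + E_kk` in `M_n(ℂ)`. -/
def partialId (n k : ℕ) : Matrix (Fin n) (Fin n) ℂ :=
  Matrix.of fun i j => if i = j ∧ (i : ℕ) < k then 1 else 0

namespace NP
variable {n : ℕ}

def permMat (τ : Equiv.Perm (Fin n)) : Matrix (Fin n) (Fin n) ℂ :=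
  Matrix.of fun i j => if τ j = i then 1 else 0

lemma permMat_mem (τ : Equiv.Perm (Fin n)) :
    permMat τ ∈ Matrix.unitaryGroup (Fin n) ℂ := by
  rw [Matrix.mem_unitaryGroup_iff', Matrix.star_eq_conjTranspose]
  ext a b
  simp only [Matrix.mul_apply, permMat, conjTranspose_apply, Matrix.of_apply, one_apply,
    apply_ite (star : ℂ → ℂ), star_one, star_zero, ite_mul, one_mul, zero_mul]
  simp only [Finset.sum_ite_eq, Finset.mem_univ, if_true]
  simp [Equiv.apply_eq_iff_eq, eq_comm]

lemma permMat_star_mul (τ : Equiv.Perm (Fin n)) : (permMat τ)ᴴ * permMat τ = 1 := by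
  have := Matrix.mem_unitaryGroup_iff'.mp (permMat_mem τ)
  rwa [Matrix.star_eq_conjTranspose] at this

lemma permMat_conj_diag (τ : Equiv.Perm (Fin n)) (d : Fin n → ℂ) :
    (permMat τ)ᴴ * Matrix.diagonal d * permMat τ = Matrix.diagonal (d ∘ τ) := by
  have h1 : Matrix.diagonal d * permMat τ = permMat τ * Matrix.diagonal (d ∘ τ) := by
    ext i j
    simp only [Matrix.diagonal_mul, Matrix.mul_diagonal, permMat, Matrix.of_apply,
      Function.comp_apply]
    by_cases h : τ j = i
    · subst h; simp
    · simp [h]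
  rw [mul_assoc, h1, ← mul_assoc, permMat_star_mul, one_mul]

lemma std_eq_diag (z : Fin n) :
    Matrix.single z z (1:ℂ) = Matrix.diagonal (fun i => if i = z then 1 else 0) := by
  ext a b
  simp only [Matrix.single, Matrix.diagonal, Matrix.of_apply]
  by_cases h1 : a = b <;> by_cases h2 : a = z <;> simp_all [eq_comm]

end NP

namespace NP
section NLemmas
variable {n : ℕ} {N : Matrix (Fin n) (Fin n) ℂ → ℝ}
  (hsmul : ∀ (c : ℂ) B, N (c • B) = ‖c‖ * N B)

include hsmul

lemma N_zero : N 0 = 0 := by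
  have := hsmul 0 0
  simpa using this

lemma N_sum_le (htri : ∀ B C, N (B + C) ≤ N B + N C)
    {ι : Type*} (s : Finset ι) (f : ι → Matrix (Fin n) (Fin n) ℂ) :
    N (∑ i ∈ s, f i) ≤ ∑ i ∈ s, N (f i) := by
  classical
  induction s using Finset.induction with
  | empty => simp [N_zero hsmul]
  | insert _ _ h ih =>
    rw [Finset.sum_insert h, Finset.sum_insert h]
    exact le_trans (htri _ _) (by linarith)

omit hsmul

lemma N_diag_perm (hinv : ∀ U V B, U ∈ Matrix.unitaryGroup (Fin n) ℂ →
      V ∈ Matrix.unitaryGroup (Fin n) ℂ → N (U * B * V) = N B)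
    (τ : Equiv.Perm (Fin n)) (d : Fin n → ℂ) :
    N (Matrix.diagonal (d ∘ τ)) = N (Matrix.diagonal d) := by
  rw [← permMat_conj_diag τ d]
  exact hinv _ _ _ (Unitary.star_mem (permMat_mem τ)) (permMat_mem τ)

lemma N_std (hn : 0 < n)
    (hinv : ∀ U V B, U ∈ Matrix.unitaryGroup (Fin n) ℂ →
      V ∈ Matrix.unitaryGroup (Fin n) ℂ → N (U * B * V) = N B)
    (hE : N (Matrix.single ⟨0, hn⟩ ⟨0, hn⟩ 1) = 1) (z : Fin n) :
    N (Matrix.single z z 1) = 1 := by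
  rw [std_eq_diag] at hE ⊢
  set z0 : Fin n := ⟨0, hn⟩
  have hfun : (fun i : Fin n => if i = z0 then (1:ℂ) else 0) ∘ (Equiv.swap z z0) =
      (fun i => if i = z then 1 else 0) := by
    funext i
    simp only [Function.comp_apply]
    by_cases h : i = z
    · subst h; simp
    · rcases eq_or_ne i z0 with h0 | h0
      · subst h0; simp [Equiv.swap_apply_right, h, Ne.symm h]
      · rw [Equiv.swap_apply_of_ne_of_ne h h0]
        simp [h, h0]
  rw [← hfun, N_diag_perm hinv, hE]

lemma diag_eq_sum (d : Fin n → ℂ) :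
    Matrix.diagonal d = ∑ i, d i • Matrix.single i i 1 := by
  ext a b
  rw [Matrix.sum_apply]
  simp only [Matrix.smul_apply, Matrix.single, Matrix.of_apply, smul_eq_mul,
    mul_ite, mul_one, mul_zero, ite_and]
  rw [Finset.sum_ite_eq' Finset.univ a]
  simp only [Finset.mem_univ, if_true]
  by_cases h : a = b <;> simp [Matrix.diagonal_apply, h]

lemma N_diag_le (hn : 0 < n)
    (htri : ∀ B C, N (B + C) ≤ N B + N C)
    (hinv : ∀ U V B, U ∈ Matrix.unitaryGroup (Fin n) ℂ →
      V ∈ Matrix.unitaryGroup (Fin n) ℂ → N (U * B * V) = N B)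
    (hE : N (Matrix.single ⟨0, hn⟩ ⟨0, hn⟩ 1) = 1)
    (hsmul : ∀ (c : ℂ) B, N (c • B) = ‖c‖ * N B)
    (σ : Fin n → ℝ) (hσ : ∀ i, 0 ≤ σ i) :
    N (Matrix.diagonal (fun i => (σ i : ℂ))) ≤ ∑ i, σ i := by
  rw [diag_eq_sum]
  refine le_trans (N_sum_le hsmul htri _ _) ?_
  refine Finset.sum_le_sum fun i _ => ?_
  rw [hsmul, N_std hn hinv hE, mul_one, Complex.norm_real, Real.norm_eq_abs, abs_of_nonneg (hσ i)]

end NLemmas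
end NP

namespace NP
section Lower
variable {n k : ℕ} {N : Matrix (Fin n) (Fin n) ℂ → ℝ}

lemma N_diag_ge (hk : k ≤ n) (hkpos : 0 < k)
    (htri : ∀ B C, N (B + C) ≤ N B + N C)
    (hsmul : ∀ (c : ℂ) B, N (c • B) = ‖c‖ * N B)
    (hinv : ∀ U V B, U ∈ Matrix.unitaryGroup (Fin n) ℂ →
      V ∈ Matrix.unitaryGroup (Fin n) ℂ → N (U * B * V) = N B)
    (hPk : N (partialId n k) = k)
    (σ : Fin n → ℝ) (hσ : ∀ i, 0 ≤ σ i)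
    (hσ0 : ∀ i : Fin n, ¬ ((i : ℕ) < k) → σ i = 0) :
    (∑ i, σ i) ≤ N (Matrix.diagonal (fun i => (σ i : ℂ))) := by
  classical
  haveI : NeZero k := ⟨hkpos.ne'⟩
  set s : ℝ := ∑ i, σ i with hs
  have hsnn : 0 ≤ s := Finset.sum_nonneg fun i _ => hσ i
  have hnk : k + (n - k) = n := Nat.add_sub_cancel' hk
  set E : Fin k ⊕ Fin (n - k) ≃ Fin n := finSumFinEquiv.trans (finCongr hnk) with hE
  have hEinl : ∀ a : Fin k, ((E (Sum.inl a) : Fin n) : ℕ) = (a : ℕ) := by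
    intro a; simp [hE, finSumFinEquiv]
  have hEinr : ∀ b : Fin (n - k), ((E (Sum.inr b) : Fin n) : ℕ) = k + (b : ℕ) := by
    intro b; simp [hE, finSumFinEquiv]
  set τ : Fin k → Equiv.Perm (Fin n) := fun j =>
    E.symm.trans ((Equiv.sumCongr (Equiv.addRight j) (Equiv.refl _)).trans E) with hτ
  have hτinl : ∀ (j : Fin k) (a : Fin k), τ j (E (Sum.inl a)) = E (Sum.inl (a + j)) := by
    intro j a; simp [hτ]
  have hτinr : ∀ (j : Fin k) (b : Fin (n - k)), τ j (E (Sum.inr b)) = E (Sum.inr b) := by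
    intro j b; simp [hτ]
  -- sum over the `inl` part equals total sum
  have hsum_inl : ∑ a : Fin k, σ (E (Sum.inl a)) = s := by
    rw [hs, ← Equiv.sum_comp E (fun i => σ i), Fintype.sum_sum_type]
    have : ∑ b : Fin (n - k), σ (E (Sum.inr b)) = 0 := by
      refine Finset.sum_eq_zero fun b _ => hσ0 _ ?_
      rw [hEinr b]; omega
    rw [this, add_zero]
  -- the matrix identity
  have hmat : ∑ j : Fin k, Matrix.diagonal (fun i => (σ (τ j i) : ℂ))
      = (s : ℂ) • partialId n k := by
    ext i i'
    rw [Matrix.sum_apply]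
    rcases eq_or_ne i i' with h | h
    · subst h
      simp only [Matrix.diagonal_apply_eq, Matrix.smul_apply, partialId, Matrix.of_apply,
        smul_eq_mul]
      by_cases hik : (i : ℕ) < k
      · obtain ⟨a, ha⟩ : ∃ a : Fin k, E (Sum.inl a) = i := by
          rcases h' : E.symm i with a | b
          · exact ⟨a, by rw [← h']; simp⟩
          · exfalso
            have := hEinr b
            rw [← h', Equiv.apply_symm_apply] at this
            omega
        subst ha
        simp only [hτinl]
        rw [← Complex.ofReal_sum]
        have : ∑ j : Fin k, σ (E (Sum.inl (a + j))) = s := by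
          rw [← hsum_inl]
          exact Fintype.sum_equiv (Equiv.addLeft a) _ _ fun j => rfl
        simp [this, hik]
      · have : ∀ j : Fin k, τ j i = i := by
          intro j
          obtain ⟨b, hb⟩ : ∃ b : Fin (n - k), E (Sum.inr b) = i := by
            rcases h' : E.symm i with a | b
            · exfalso
              have := hEinl a
              rw [← h', Equiv.apply_symm_apply] at this
              omega
            · exact ⟨b, by rw [← h']; simp⟩
          rw [← hb, hτinr]
        simp only [this]
        simp [hσ0 i hik, hik]
    · simp [Matrix.diagonal_apply_ne _ h, Matrix.smul_apply, partialId, h]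
  -- conclude
  have h1 : N ((s : ℂ) • partialId n k) ≤ ∑ j : Fin k, N (Matrix.diagonal (fun i => (σ (τ j i) : ℂ))) := by
    rw [← hmat]
    exact N_sum_le hsmul htri _ _
  have h2 : ∀ j : Fin k, N (Matrix.diagonal (fun i => (σ (τ j i) : ℂ)))
      = N (Matrix.diagonal (fun i => (σ i : ℂ))) := fun j =>
    N_diag_perm hinv (τ j) (fun i => (σ i : ℂ))
  rw [hsmul, hPk, Complex.norm_real, Real.norm_eq_abs, abs_of_nonneg hsnn] at h1
  simp only [h2, Finset.sum_const, Finset.card_univ, Fintype.card_fin, nsmul_eq_mul] at h1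
  have hkpos' : (0:ℝ) < k := by exact_mod_cast hkpos
  nlinarith [h1]

end Lower
end NP

namespace NP

lemma exists_svd {n : ℕ} (B : Matrix (Fin n) (Fin n) ℂ) :
    ∃ (U V : Matrix (Fin n) (Fin n) ℂ) (σ : Fin n → ℝ),
      U ∈ Matrix.unitaryGroup (Fin n) ℂ ∧ V ∈ Matrix.unitaryGroup (Fin n) ℂ ∧
      (∀ i, 0 ≤ σ i) ∧ B = U * Matrix.diagonal (fun i => (σ i : ℂ)) * V := by
  classical
  have hH : (Bᴴ * B).PosSemidef := Matrix.posSemidef_conjTranspose_mul_self B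
  set W : Matrix (Fin n) (Fin n) ℂ := (Matrix.IsHermitian.eigenvectorUnitary hH.1 : Matrix (Fin n) (Fin n) ℂ) with hWdef
  have hW : W ∈ Matrix.unitaryGroup (Fin n) ℂ := (Matrix.IsHermitian.eigenvectorUnitary hH.1).2
  have hWW : Wᴴ * W = 1 := by
    have := Matrix.mem_unitaryGroup_iff'.mp hW
    rwa [Matrix.star_eq_conjTranspose] at this
  have hWW' : W * Wᴴ = 1 := by
    have := Matrix.mem_unitaryGroup_iff.mp hW
    rwa [Matrix.star_eq_conjTranspose] at this
  set μ : Fin n → ℝ := hH.1.eigenvalues with hμdef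
  have hμ : ∀ i, 0 ≤ μ i := fun i => hH.eigenvalues_nonneg i
  set σ : Fin n → ℝ := fun i => Real.sqrt (μ i) with hσdef
  have hσ : ∀ i, 0 ≤ σ i := fun i => Real.sqrt_nonneg _
  have hσsq : ∀ i, σ i * σ i = μ i := fun i => Real.mul_self_sqrt (hμ i)
  have hσ0 : ∀ i, σ i = 0 ↔ μ i = 0 := by
    intro i
    rw [hσdef]
    simp only
    rw [Real.sqrt_eq_zero (hμ i)]
  have hspec : Bᴴ * B = W * Matrix.diagonal (fun i => (μ i : ℂ)) * Wᴴ := by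
    have := hH.1.spectral_theorem
    rw [Unitary.conjStarAlgAut_apply] at this
    rw [this]
    rfl
  set C : Matrix (Fin n) (Fin n) ℂ := B * W with hCdef
  have hCC : Cᴴ * C = Matrix.diagonal (fun i => (μ i : ℂ)) := by
    have h2 : Cᴴ * C = Wᴴ * ((Bᴴ * B) * W) := by
      rw [hCdef, Matrix.conjTranspose_mul, mul_assoc, ← mul_assoc Bᴴ]
    rw [h2, hspec, mul_assoc (W * Matrix.diagonal _) Wᴴ W, hWW, mul_one, ← mul_assoc, hWW, one_mul]
  have key : ∀ a b, (∑ i, (starRingEnd ℂ) (C i a) * C i b)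
      = if a = b then (μ a : ℂ) else 0 := by
    intro a b
    have := congrFun (congrFun hCC a) b
    rw [Matrix.mul_apply] at this
    simp only [Matrix.conjTranspose_apply, Matrix.diagonal, Matrix.of_apply] at this
    simpa [eq_comm] using this
  -- columns with nonzero singular value, normalized
  set v : Fin n → EuclideanSpace ℂ (Fin n) :=
    fun j => (WithLp.equiv 2 _).symm (fun i => C i j / (σ j : ℂ)) with hvdef
  have hortho : Orthonormal ℂ (Set.restrict {j | σ j ≠ 0} v) := by
    rw [orthonormal_iff_ite]
    rintro ⟨a, ha⟩ ⟨b, hb⟩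
    have ha' : σ a ≠ 0 := ha
    have hb' : σ b ≠ 0 := hb
    simp only [Set.restrict_apply, hvdef]
    rw [PiLp.inner_apply]
    simp only [RCLike.inner_apply']
    change ∑ i, (starRingEnd ℂ) (C i a / (σ a : ℂ)) * (C i b / (σ b : ℂ)) =
      if (⟨a, ha⟩ : {j | σ j ≠ 0}) = ⟨b, hb⟩ then 1 else 0
    have hrw : ∀ i, (starRingEnd ℂ) (C i a / (σ a : ℂ)) * (C i b / (σ b : ℂ))
        = ((starRingEnd ℂ) (C i a) * C i b) / ((σ a : ℂ) * (σ b : ℂ)) := by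
      intro i
      rw [map_div₀, Complex.conj_ofReal]
      ring
    simp_rw [hrw, ← Finset.sum_div, key a b]
    rcases eq_or_ne a b with h | h
    · subst h
      rw [if_pos rfl, if_pos rfl, ← Complex.ofReal_mul, hσsq a, div_self]
      exact Complex.ofReal_ne_zero.mpr fun h0 => ha' ((hσ0 a).mpr h0)
    · rw [if_neg h, if_neg (by simpa using h), zero_div]
  obtain ⟨bON, hbON⟩ := hortho.exists_orthonormalBasis_extension_of_card_eq
    (by simp [finrank_euclideanSpace_fin])
  set U : Matrix (Fin n) (Fin n) ℂ :=
    Matrix.of (fun i j => (WithLp.equiv 2 _) (bON j) i) with hUdef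
  have hU : U ∈ Matrix.unitaryGroup (Fin n) ℂ := by
    rw [Matrix.mem_unitaryGroup_iff', Matrix.star_eq_conjTranspose]
    ext a b
    rw [Matrix.mul_apply, Matrix.one_apply]
    have := orthonormal_iff_ite.mp bON.orthonormal a b
    rw [PiLp.inner_apply] at this
    simp only [RCLike.inner_apply'] at this
    simp only [hUdef, Matrix.conjTranspose_apply, Matrix.of_apply]
    rw [← this]
    rfl
  -- zero columns
  have hcol0 : ∀ j, σ j = 0 → ∀ i, C i j = 0 := by
    intro j hj i
    have h0 : (∑ i, (starRingEnd ℂ) (C i j) * C i j) = 0 := by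
      rw [key j j, if_pos rfl, (hσ0 j).mp hj, Complex.ofReal_zero]
    have h1 : ∀ i, (starRingEnd ℂ) (C i j) * C i j = (Complex.normSq (C i j) : ℂ) := by
      intro i
      rw [mul_comm, Complex.mul_conj]
    rw [Finset.sum_congr rfl fun i _ => h1 i, ← Complex.ofReal_sum,
      Complex.ofReal_eq_zero] at h0
    have h2 := (Finset.sum_eq_zero_iff_of_nonneg
      (fun i _ => Complex.normSq_nonneg (C i j))).mp h0 i (Finset.mem_univ i)
    exact Complex.normSq_eq_zero.mp h2
  have hBW : B * W = U * Matrix.diagonal (fun i => (σ i : ℂ)) := by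
    ext i j
    rw [Matrix.mul_diagonal]
    rcases eq_or_ne (σ j) 0 with hj | hj
    · rw [← hCdef]
      rw [hcol0 j hj i, hj]
      simp
    · have := hbON j hj
      have h3 : (WithLp.equiv 2 _) (bON j) i = C i j / (σ j : ℂ) := by
        rw [this, hvdef]
        simp [WithLp.equiv_symm_apply]
      rw [← hCdef, hUdef]
      simp only [Matrix.of_apply]
      rw [h3, div_mul_cancel₀]
      exact Complex.ofReal_ne_zero.mpr hj
  refine ⟨U, Wᴴ, σ, hU, ?_, hσ, ?_⟩
  · have := Unitary.star_mem hW
    rwa [Matrix.star_eq_conjTranspose] at this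
  · rw [← hBW, mul_assoc, hWW', mul_one]

end NP

namespace NP

open scoped MatrixOrder in
lemma traceNorm_svd {n : ℕ} (B U V : Matrix (Fin n) (Fin n) ℂ) (σ : Fin n → ℝ)
    (hU : U ∈ Matrix.unitaryGroup (Fin n) ℂ) (hV : V ∈ Matrix.unitaryGroup (Fin n) ℂ)
    (hσ : ∀ i, 0 ≤ σ i)
    (hB : B = U * Matrix.diagonal (fun i => (σ i : ℂ)) * V) :
    traceNorm B = ∑ i, σ i := by
  classical
  set D : Matrix (Fin n) (Fin n) ℂ := Matrix.diagonal (fun i => (σ i : ℂ)) with hDdef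
  have hDH : Dᴴ = D := by
    have hst : (star fun i => ((σ i : ℂ))) = fun i => ((σ i : ℂ)) :=
      funext fun i => Complex.conj_ofReal _
    rw [hDdef, Matrix.diagonal_conjTranspose, hst]
  have hUU : Uᴴ * U = 1 := by
    have := Matrix.mem_unitaryGroup_iff'.mp hU; rwa [Matrix.star_eq_conjTranspose] at this
  have hVV : V * Vᴴ = 1 := by
    have := Matrix.mem_unitaryGroup_iff.mp hV; rwa [Matrix.star_eq_conjTranspose] at this
  have hD2 : D * D = Matrix.diagonal (fun i => ((σ i * σ i : ℝ) : ℂ)) := by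
    rw [hDdef, Matrix.diagonal_mul_diagonal]
    congr 1
    funext i
    push_cast
    ring
  have hBB : Bᴴ * B = Vᴴ * (Matrix.diagonal (fun i => ((σ i * σ i : ℝ) : ℂ))) * V := by
    rw [hB, Matrix.conjTranspose_mul, Matrix.conjTranspose_mul, hDH]
    have e : Vᴴ * (D * Uᴴ) * (U * D * V) = Vᴴ * (D * ((Uᴴ * U) * (D * V))) := by noncomm_ring
    rw [e, hUU, one_mul, ← mul_assoc D D, hD2, ← mul_assoc]
  set R : Matrix (Fin n) (Fin n) ℂ := Vᴴ * D * V with hRdef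
  have hRps : R.PosSemidef := by
    have hDps : D.PosSemidef := by
      rw [hDdef]
      refine Matrix.posSemidef_diagonal_iff.mpr fun i => ?_
      rw [Complex.zero_le_real]
      exact hσ i
    have := hDps.conjTranspose_mul_mul_same V
    rwa [← hRdef] at this
  have hRsq : R ^ 2 = Bᴴ * B := by
    rw [pow_two, hRdef, hBB]
    have e : Vᴴ * D * V * (Vᴴ * D * V) = Vᴴ * (D * ((V * Vᴴ) * (D * V))) := by noncomm_ring
    rw [e, hVV, one_mul, ← mul_assoc D D, hD2, ← mul_assoc]
  have hsqrt : R = CFC.sqrt (Bᴴ * B) := by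
    rw [← hRsq, pow_two]; exact (CFC.sqrt_mul_self R hRps.nonneg).symm
  have hT : traceNorm B = (CFC.sqrt (Bᴴ * B)).trace.re := by
    rw [traceNorm, CFC.sqrt_eq_real_sqrt _ (Matrix.posSemidef_conjTranspose_mul_self B).nonneg,
      cfcₙ_eq_cfc (hf := Real.continuous_sqrt.continuousOn) (hf0 := Real.sqrt_zero),
      (Matrix.posSemidef_conjTranspose_mul_self B).1.cfc_eq, Matrix.IsHermitian.cfc,
      Unitary.conjStarAlgAut_apply]
    rfl
  rw [hT, ← hsqrt, hRdef, Matrix.trace_mul_cycle, hVV, one_mul, hDdef,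
    Matrix.trace_diagonal]
  simp

lemma exists_perm_support {n k : ℕ} (S : Finset (Fin n)) (hS : S.card ≤ k) :
    ∃ τ : Equiv.Perm (Fin n), ∀ i : Fin n, ¬ ((i : ℕ) < k) → τ i ∉ S := by
  classical
  set m := S.card with hm
  have hmn : m ≤ n := by
    have := S.card_le_univ
    simpa using this
  have hc : Sᶜ.card = n - m := by
    rw [Finset.card_compl]
    simp [hm]
  set e1 : Fin m ⊕ Fin (n - m) ≃ Fin n := finSumFinEquiv.trans (finCongr (Nat.add_sub_cancel' hmn)) with he1
  set τ : Equiv.Perm (Fin n) := (e1.symm.trans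
    ((Equiv.sumCongr (S.orderIsoOfFin rfl).toEquiv
      ((Sᶜ.orderIsoOfFin hc).toEquiv.trans
        (Equiv.subtypeEquivRight fun a => Finset.mem_compl))).trans
      (Equiv.sumCompl (· ∈ S)))) with hτ
  refine ⟨τ, fun i hi => ?_⟩
  rcases h' : e1.symm i with a | b
  · exfalso
    have : ((e1 (Sum.inl a) : Fin n) : ℕ) = (a : ℕ) := by simp [he1, finSumFinEquiv]
    rw [← h', Equiv.apply_symm_apply] at this
    have := a.isLt
    omega
  · have : τ i = ((Equiv.subtypeEquivRight (fun a => Finset.mem_compl))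
        ((Sᶜ.orderIsoOfFin hc).toEquiv b) : Fin n) := by
      rw [hτ]
      simp only [Equiv.trans_apply, h', Equiv.sumCongr_apply, Sum.map_inr]
      rfl
    rw [this]
    exact ((Equiv.subtypeEquivRight (fun a => Finset.mem_compl))
      ((Sᶜ.orderIsoOfFin hc).toEquiv b)).2

end NP

namespace NP
section Final
variable {n k : ℕ} {N : Matrix (Fin n) (Fin n) ℂ → ℝ}

lemma N_diag_eq (hn : 0 < n) (hk : k ≤ n)
    (hpos : ∀ B, 0 ≤ N B)
    (htri : ∀ B C, N (B + C) ≤ N B + N C)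
    (hsmul : ∀ (c : ℂ) B, N (c • B) = ‖c‖ * N B)
    (hinv : ∀ U V B, U ∈ Matrix.unitaryGroup (Fin n) ℂ →
      V ∈ Matrix.unitaryGroup (Fin n) ℂ → N (U * B * V) = N B)
    (hE : N (Matrix.single ⟨0, hn⟩ ⟨0, hn⟩ 1) = 1)
    (hPk : N (partialId n k) = k)
    (σ : Fin n → ℝ) (hσ : ∀ i, 0 ≤ σ i)
    (hσ0 : ∀ i : Fin n, ¬ ((i : ℕ) < k) → σ i = 0) :
    N (Matrix.diagonal (fun i => (σ i : ℂ))) = ∑ i, σ i := by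
  rcases Nat.eq_zero_or_pos k with hk0 | hkpos
  · subst hk0
    have hz : ∀ i, σ i = 0 := fun i => hσ0 i (by omega)
    have h1 : (fun i : Fin n => (σ i : ℂ)) = fun _ => (0 : ℂ) := by
      funext i; rw [hz i]; simp
    have h2 : ∑ i, σ i = 0 := Finset.sum_eq_zero fun i _ => hz i
    rw [h1, h2, Matrix.diagonal_zero]
    exact N_zero hsmul
  · exact le_antisymm (N_diag_le hn htri hinv hE hsmul σ hσ)
      (N_diag_ge hk hkpos htri hsmul hinv hPk σ hσ hσ0)

theorem main (hn : 0 < n) (hk : k ≤ n)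
    (hpos : ∀ B, 0 ≤ N B) (hzero : ∀ B, N B = 0 → B = 0)
    (htri : ∀ B C, N (B + C) ≤ N B + N C)
    (hsmul : ∀ (c : ℂ) B, N (c • B) = ‖c‖ * N B)
    (hinv : ∀ U V B, U ∈ Matrix.unitaryGroup (Fin n) ℂ →
      V ∈ Matrix.unitaryGroup (Fin n) ℂ → N (U * B * V) = N B)
    (hE : N (Matrix.single ⟨0, hn⟩ ⟨0, hn⟩ 1) = 1)
    (hPk : N (partialId n k) = k) :
    ∀ B : Matrix (Fin n) (Fin n) ℂ, B.rank ≤ k → N B = traceNorm B := by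
  classical
  intro B hrank
  obtain ⟨U, V, σ, hU, hV, hσ, hB⟩ := exists_svd B
  set D : Matrix (Fin n) (Fin n) ℂ := Matrix.diagonal (fun i => (σ i : ℂ)) with hDdef
  have hUU : Uᴴ * U = 1 := by
    have := Matrix.mem_unitaryGroup_iff'.mp hU; rwa [Matrix.star_eq_conjTranspose] at this
  have hVV : V * Vᴴ = 1 := by
    have := Matrix.mem_unitaryGroup_iff.mp hV; rwa [Matrix.star_eq_conjTranspose] at this
  have hD : D = Uᴴ * (B * Vᴴ) := by
    rw [hB]
    have e : Uᴴ * (U * D * V * Vᴴ) = Uᴴ * U * D * (V * Vᴴ) := by noncomm_ring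
    rw [e, hUU, hVV, one_mul, mul_one]
  have hrankD : D.rank ≤ k := by
    rw [hD]
    exact le_trans (Matrix.rank_mul_le_right _ _)
      (le_trans (Matrix.rank_mul_le_left _ _) hrank)
  set S : Finset (Fin n) := Finset.univ.filter (fun i => σ i ≠ 0) with hSdef
  have hScard : S.card ≤ k := by
    have h1 := Matrix.rank_diagonal (fun i => (σ i : ℂ))
    rw [hDdef, h1] at hrankD
    have h2 : Fintype.card {i // (σ i : ℂ) ≠ 0} = S.card := by
      rw [Fintype.card_subtype]
      congr 1
      apply Finset.filter_congr
      intro i _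
      simp [Complex.ofReal_ne_zero]
    omega
  obtain ⟨τ, hτ⟩ := exists_perm_support S hScard
  have hσ0' : ∀ i : Fin n, ¬ ((i : ℕ) < k) → σ (τ i) = 0 := by
    intro i hi
    have := hτ i hi
    rw [hSdef] at this
    simpa using this
  have h1 : N B = N D := by
    rw [hB]
    exact hinv U V D hU hV
  have h2 : N D = N (Matrix.diagonal (fun i => (σ (τ i) : ℂ))) := by
    rw [hDdef]
    exact (N_diag_perm hinv τ (fun i => (σ i : ℂ))).symm
  have h3 : N (Matrix.diagonal (fun i => (σ (τ i) : ℂ))) = ∑ i, σ (τ i) :=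
    N_diag_eq hn hk hpos htri hsmul hinv hE hPk _ (fun i => hσ _) hσ0'
  have h4 : ∑ i, σ (τ i) = ∑ i, σ i := Equiv.sum_comp τ σ
  have h5 : traceNorm B = ∑ i, σ i := traceNorm_svd B U V σ hU hV hσ hB
  rw [h1, h2, h3, h4, h5]

end Final
end NP

/-- If a unitarily invariant norm on `M_n(ℂ)` satisfies `‖E₁₁‖ = 1` and
`‖E₁₁ + ⋯ + E_kk‖ = k`, then it agrees with the trace norm on all matrices of
rank at most `k`. -/
theorem norm_eq_traceNorm_of_rank_le {n k : ℕ} (hn : 0 < n) (hk : k ≤ n)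
    (N : Matrix (Fin n) (Fin n) ℂ → ℝ)
    (hpos : ∀ B, 0 ≤ N B) (hzero : ∀ B, N B = 0 → B = 0)
    (htri : ∀ B C, N (B + C) ≤ N B + N C)
    (hsmul : ∀ (c : ℂ) B, N (c • B) = ‖c‖ * N B)
    (hinv : ∀ U V B, U ∈ Matrix.unitaryGroup (Fin n) ℂ →
      V ∈ Matrix.unitaryGroup (Fin n) ℂ → N (U * B * V) = N B)
    (hE : N (Matrix.single ⟨0, hn⟩ ⟨0, hn⟩ 1) = 1)
    (hPk : N (partialId n k) = k) :
    ∀ B : Matrix (Fin n) (Fin n) ℂ, B.rank ≤ k → N B = traceNorm B :=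
  NP.main hn hk hpos hzero htri hsmul hinv hE hPk
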